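/- Let q > 0, c > 0, S > 0, R + B > 0, and A > S. Define V(p) = (p − c)·( S·(R + B)/(A·p) + S/(A·q) − 1/q ) for p > 0. Then V′(p) = (S − A)/(A·q) + c·S·(R + B)/(A·p²), the point φ = √( q·c·S·(R + B)/(A − S) ) is the unique p > 0 with V′(p) = 0, and φ is the unique maximizer of V over (0, ∞). -/

import Mathlib

/-- For `V(p) = (p − c)·(S·(R + B)/(A·p) + S/(A·q) − 1/q)` with `A > S`:
`V′(p) = (S − A)/(A·q) + c·S·(R + B)/(A·p²)` on `(0, ∞)`, the point
`φ = √(q·c·S·(R + B)/(A − S))` is the unique positive root of `V′`, and `φ` is the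
unique maximizer of `V` over `(0, ∞)`. -/
theorem stmt9 (q c S A R B : ℝ) (hq : 0 < q) (hc : 0 < c) (hS : 0 < S)
    (hRB : 0 < R + B) (hAS : S < A)
    (V : ℝ → ℝ)
    (hV : ∀ p, V p = (p - c) * (S * (R + B) / (A * p) + S / (A * q) - 1 / q))
    (φ : ℝ) (hφ : φ = Real.sqrt (q * c * S * (R + B) / (A - S))) :
    (∀ p : ℝ, 0 < p → deriv V p = (S - A) / (A * q) + c * S * (R + B) / (A * p ^ 2)) ∧
    (0 < φ ∧ deriv V φ = 0 ∧ ∀ p : ℝ, 0 < p → deriv V p = 0 → p = φ) ∧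
    (∀ p : ℝ, 0 < p → V p ≤ V φ ∧ (V p = V φ → p = φ)) := by
  have hA : 0 < A := hS.trans hAS
  have hASpos : 0 < A - S := sub_pos.2 hAS
  have hVfun : V = fun p : ℝ => (p - c) * (S * (R + B) / A * p⁻¹ + (S / (A * q) - 1 / q)) := by
    funext p
    rw [hV]
    ring
  have hd : ∀ p : ℝ, 0 < p →
      deriv V p = (S - A) / (A * q) + c * S * (R + B) / (A * p ^ 2) := by
    intro p hp
    have h1 : HasDerivAt (fun p : ℝ => S * (R + B) / A * p⁻¹ + (S / (A * q) - 1 / q))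
        (S * (R + B) / A * (-(p ^ 2)⁻¹)) p :=
      ((hasDerivAt_inv hp.ne').const_mul (S * (R + B) / A)).add_const _
    have h2 : HasDerivAt (fun p : ℝ => p - c) 1 p := (hasDerivAt_id p).sub_const c
    have h3 := h2.mul h1
    rw [hVfun, (show HasDerivAt (fun p : ℝ => (p - c) * (S * (R + B) / A * p⁻¹ + (S / (A * q) - 1 / q))) _ p from h3).deriv]
    field_simp
    ring
  have hφpos : 0 < φ := by
    rw [hφ]
    exact Real.sqrt_pos.2 (by positivity)
  have hφsq : (A - S) * φ ^ 2 = q * c * S * (R + B) := by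
    rw [hφ, Real.sq_sqrt (by positivity)]
    field_simp
  have hφroot : deriv V φ = 0 := by
    rw [hd φ hφpos]
    field_simp
    linear_combination -hφsq
  have key : ∀ p : ℝ, 0 < p → V φ - V p = (A - S) / (A * q) * (p - φ) ^ 2 / p := by
    intro p hp
    rw [hV, hV]
    field_simp
    linear_combination (p - φ) * hφsq
  refine ⟨hd, ⟨hφpos, hφroot, ?_⟩, ?_⟩
  · intro p hp hzero
    rw [hd p hp] at hzero
    have hsq : p ^ 2 = φ ^ 2 := by
      field_simp at hzero
      have hmul : (A * (A - S)) * (p ^ 2 - φ ^ 2) = 0 := by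
        linear_combination -A * hzero - A * hφsq
      have hne : (A * (A - S)) ≠ 0 := by positivity
      have := (mul_eq_zero.1 hmul).resolve_left hne
      linarith
    have : (p - φ) * (p + φ) = 0 := by linear_combination hsq
    rcases mul_eq_zero.1 this with h | h
    · linarith
    · linarith
  · intro p hp
    have hk := key p hp
    constructor
    · have hnn : 0 ≤ (A - S) / (A * q) * (p - φ) ^ 2 / p := by positivity
      linarith
    · intro heq
      rw [heq, sub_self] at hk
      have h2 : (p - φ) ^ 2 = 0 := by
        have hpos : 0 < (A - S) / (A * q) / p := by positivity
        by_contra h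
        have hsqpos : 0 < (p - φ) ^ 2 := lt_of_le_of_ne (sq_nonneg _) (Ne.symm h)
        have hpos2 : 0 < (A - S) / (A * q) / p * (p - φ) ^ 2 := mul_pos hpos hsqpos
        have hk' : (A - S) / (A * q) / p * (p - φ) ^ 2 = 0 := by linear_combination -hk
        linarith
      have := pow_eq_zero_iff (n := 2) (by norm_num) |>.1 h2
      linarith [sub_eq_zero.1 this]
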